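/- Let K ≥ 1, T ≥ 1 be integers and let μ_t(a) ∈ [0,1] with significant shift times τ_0 = 1 < τ_1 < … < τ_{L̃} and τ_{L̃+1} := T+1 as defined in the context. For any phase [τ_i, τ_{i+1}) with τ_{i+1} ≤ T (i.e., a phase ending in a recorded significant shift), the total variation over the phase satisfies Σ_{t=τ_i+1}^{τ_{i+1}} max_{a∈[K]} |μ_t(a) − μ_{t−1}(a)| ≥ (1/4)·√(K/(τ_{i+1} − τ_i)). -/
import Mathlib


/-- The worst gap `δ_t(a) = max_{a' ∈ [K]} μ_t(a') − μ_t(a)`. -/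
noncomputable def worstGap (K : ℕ) (hK : 1 ≤ K) (μ : ℕ → ℕ → ℝ) (t a : ℕ) : ℝ :=
  (Finset.Icc 1 K).sup' (Finset.nonempty_Icc.mpr hK) (μ t) - μ t a

/-- Arm `a` incurs significant regret on `[s₁, s₂]`:
`Σ_{t=s₁}^{s₂} δ_t(a) ≥ √(K·(s₂ − s₁))`. -/
def SigRegret (K : ℕ) (δ : ℕ → ℕ → ℝ) (a s₁ s₂ : ℕ) : Prop :=
  Real.sqrt ((K * (s₂ - s₁) : ℕ)) ≤ ∑ t ∈ Finset.Icc s₁ s₂, δ t a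

private lemma telescope_sum (f : ℕ → ℝ) (a N : ℕ) (h : a ≤ N) :
    ∑ t ∈ Finset.Icc (a + 1) N, (f (t - 1) - f t) = f a - f N := by
  induction N, h using Nat.le_induction with
  | base => simp
  | succ N hN ih =>
    rw [Finset.sum_Icc_succ_top (by omega), ih]
    show f a - f N + (f N - f (N + 1)) = f a - f (N + 1)
    ring

/-- per-phase total-variation lower bound used for Corollary 3: any phase
`[τ_i, τ_{i+1})` ending in a recorded significant shift (`τ_{i+1} ≤ T`) carries total
variation at least `(1/4)·√(K/(τ_{i+1} − τ_i))`. -/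
theorem phase_total_variation_lower_bound
    (K T : ℕ) (hK : 1 ≤ K) (hT : 1 ≤ T)
    (μ : ℕ → ℕ → ℝ)
    (hμ : ∀ t ∈ Finset.Icc 1 T, ∀ a ∈ Finset.Icc 1 K, μ t a ∈ Set.Icc (0 : ℝ) 1)
    (δ : ℕ → ℕ → ℝ) (hδ : ∀ t a, δ t a = worstGap K hK μ t a)
    -- significant shift times τ_0 = 1 < τ_1 < … < τ_L, with τ_{L+1} = T + 1
    (L : ℕ) (τ : ℕ → ℕ)
    (hτ0 : τ 0 = 1) (hτlast : τ (L + 1) = T + 1)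
    (hτmono : ∀ i ≤ L, τ i < τ (i + 1))
    -- each recorded shift time τ_{i+1} (i < L) is a significant shift: every arm incurs
    -- significant regret on some subinterval of [τ_i, τ_{i+1}]
    (hshift : ∀ i < L, ∀ a ∈ Finset.Icc 1 K, ∃ s₁ s₂, τ i ≤ s₁ ∧ s₁ < s₂ ∧ s₂ ≤ τ (i + 1) ∧
      SigRegret K δ a s₁ s₂)
    -- minimality: strictly before the end of a phase, some arm has no significant regret yet
    (hmin : ∀ i ≤ L, ∀ t, τ i ≤ t → t < τ (i + 1) → t ≤ T →
      ∃ a ∈ Finset.Icc 1 K, ∀ s₁ s₂, τ i ≤ s₁ → s₁ < s₂ → s₂ ≤ t → ¬ SigRegret K δ a s₁ s₂)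
    :
    ∀ i ≤ L, τ (i + 1) ≤ T →
      (1 / 4) * Real.sqrt ((K : ℝ) / ((τ (i + 1) - τ i : ℕ) : ℝ)) ≤
        ∑ t ∈ Finset.Icc (τ i + 1) (τ (i + 1)),
          (Finset.Icc 1 K).sup' (Finset.nonempty_Icc.mpr hK)
            (fun a => |μ t a - μ (t - 1) a|) := by
  intro i hiL hτT
  have hiL' : i < L := by
    rcases Nat.lt_or_ge i L with h | h
    · exact h
    · exfalso
      have hi : i = L := le_antisymm hiL h
      rw [hi] at hτT
      omega
  set N := τ (i + 1) with hN
  set s := τ i with hs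
  have hsN : s < N := hτmono i hiL
  -- abbreviation for per-round variation
  set V : ℕ → ℝ := fun t => (Finset.Icc 1 K).sup' (Finset.nonempty_Icc.mpr hK) (fun a => |μ t a - μ (t - 1) a|) with hV
  -- best arm at round N
  obtain ⟨astar, hastar, hsup⟩ := Finset.exists_mem_eq_sup' (Finset.nonempty_Icc.mpr hK) (μ N)
  have hδN : δ N astar = 0 := by
    rw [hδ]
    unfold worstGap
    rw [hsup]
    ring
  have hVnonneg : ∀ t, 0 ≤ V t :=
    fun t => le_trans (abs_nonneg _) (Finset.le_sup' (fun a => |μ t a - μ (t - 1) a|) hastar)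
  -- one-step change of the gap is at most 2 * V t
  have hstep : ∀ t, δ (t - 1) astar - δ t astar ≤ 2 * V t := by
    intro t
    rw [hδ, hδ]
    unfold worstGap
    have h1 : (Finset.Icc 1 K).sup' (Finset.nonempty_Icc.mpr hK) (μ (t - 1)) ≤ (Finset.Icc 1 K).sup' (Finset.nonempty_Icc.mpr hK) (μ t) + V t := by
      apply Finset.sup'_le
      intro b hb
      have hb1 : μ (t - 1) b - μ t b ≤ |μ t b - μ (t - 1) b| := by
        rw [abs_sub_comm]; exact le_abs_self _
      have hb2 : μ t b ≤ (Finset.Icc 1 K).sup' (Finset.nonempty_Icc.mpr hK) (μ t) := Finset.le_sup' (μ t) hb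
      have hb3 : |μ t b - μ (t - 1) b| ≤ V t :=
        Finset.le_sup' (fun a => |μ t a - μ (t - 1) a|) hb
      linarith
    have h2 : μ t astar - μ (t - 1) astar ≤ V t :=
      le_trans (le_abs_self _) (Finset.le_sup' (fun a => |μ t a - μ (t - 1) a|) hastar)
    linarith
  -- significant regret interval for the best arm
  obtain ⟨s₁, s₂, hs₁, hlt, hs₂, hsig⟩ := hshift i hiL' astar hastar
  set m := s₂ - s₁ with hm
  have hm1 : 1 ≤ m := by omega
  set c : ℝ := Real.sqrt ((K * m : ℕ)) / ((m : ℝ) + 1) with hc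
  -- some round t₀ in [s₁, s₂] has gap at least c
  have hex : ∃ t₀ ∈ Finset.Icc s₁ s₂, c ≤ δ t₀ astar := by
    by_contra hcon
    push_neg at hcon
    have hlt' : ∑ t ∈ Finset.Icc s₁ s₂, δ t astar < ∑ _t ∈ Finset.Icc s₁ s₂, c :=
      Finset.sum_lt_sum_of_nonempty (Finset.nonempty_Icc.mpr (le_of_lt hlt)) hcon
    rw [Finset.sum_const, Nat.card_Icc] at hlt'
    have hcard : s₂ + 1 - s₁ = m + 1 := by omega
    rw [hcard] at hlt'
    have hsm : ((m : ℝ) + 1) * c = Real.sqrt ((K * m : ℕ)) := by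
      rw [hc]
      field_simp
    have hsig' := hsig
    unfold SigRegret at hsig'
    rw [← hm] at hsig'
    have : (m + 1) • c = ((m : ℝ) + 1) * c := by
      rw [nsmul_eq_mul]; push_cast; ring
    rw [this, hsm] at hlt'
    linarith
  obtain ⟨t₀, ht₀mem, ht₀⟩ := hex
  rw [Finset.mem_Icc] at ht₀mem
  have ht₀N : t₀ ≤ N := le_trans ht₀mem.2 hs₂
  -- telescoping bound: c ≤ 2 * total variation
  have htel := telescope_sum (fun t => δ t astar) t₀ N ht₀N
  have h4 : δ t₀ astar - δ N astar ≤ ∑ t ∈ Finset.Icc (t₀ + 1) N, 2 * V t := by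
    rw [← htel]
    exact Finset.sum_le_sum (fun t _ => hstep t)
  have h5 : ∑ t ∈ Finset.Icc (t₀ + 1) N, 2 * V t ≤ ∑ t ∈ Finset.Icc (s + 1) N, 2 * V t := by
    apply Finset.sum_le_sum_of_subset_of_nonneg
    · apply Finset.Icc_subset_Icc _ le_rfl
      omega
    · intro t _ _
      have := hVnonneg t
      linarith
  have hsum2 : ∑ t ∈ Finset.Icc (s + 1) N, 2 * V t = 2 * ∑ t ∈ Finset.Icc (s + 1) N, V t := by
    rw [Finset.mul_sum]
  have hmain : c ≤ 2 * ∑ t ∈ Finset.Icc (s + 1) N, V t := by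
    rw [← hsum2]
    calc c ≤ δ t₀ astar := ht₀
    _ = δ t₀ astar - δ N astar := by rw [hδN]; ring
    _ ≤ ∑ t ∈ Finset.Icc (t₀ + 1) N, 2 * V t := h4
    _ ≤ ∑ t ∈ Finset.Icc (s + 1) N, 2 * V t := h5
  -- compare c/2 with (1/4) √(K/Δ)
  have hmΔ : m ≤ N - s := by omega
  have hΔ1 : 1 ≤ N - s := by omega
  have hΔpos : (0 : ℝ) < ((N - s : ℕ) : ℝ) := by
    exact_mod_cast Nat.lt_of_lt_of_le Nat.zero_lt_one hΔ1
  have hsqΔpos : 0 < Real.sqrt ((N - s : ℕ) : ℝ) := Real.sqrt_pos.mpr hΔpos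
  have hmR : (1 : ℝ) ≤ (m : ℝ) := by exact_mod_cast hm1
  have hmsq : ((m : ℝ)) = Real.sqrt m * Real.sqrt m :=
    (Real.mul_self_sqrt (by positivity)).symm
  have hmle : Real.sqrt (m : ℝ) ≤ Real.sqrt ((N - s : ℕ) : ℝ) :=
    Real.sqrt_le_sqrt (by exact_mod_cast hmΔ)
  have key2 : (m : ℝ) + 1 ≤ 2 * Real.sqrt ((N - s : ℕ) : ℝ) * Real.sqrt (m : ℝ) := by
    nlinarith [Real.sqrt_nonneg (m : ℝ)]
  have hKm : ((K * m : ℕ) : ℝ) = (K : ℝ) * (m : ℝ) := by push_cast; ring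
  have hsqKm : Real.sqrt ((K * m : ℕ) : ℝ) = Real.sqrt K * Real.sqrt m := by
    rw [hKm, Real.sqrt_mul (by positivity)]
  have hdiv : Real.sqrt ((K : ℝ) / ((N - s : ℕ) : ℝ)) =
      Real.sqrt K / Real.sqrt ((N - s : ℕ) : ℝ) := by
    rw [Real.sqrt_div (by positivity)]
  have hfinal : (1 / 4) * Real.sqrt ((K : ℝ) / ((N - s : ℕ) : ℝ)) ≤ c / 2 := by
    rw [hdiv, hc, hsqKm]
    rw [show (1 / 4 : ℝ) * (Real.sqrt K / Real.sqrt ((N - s : ℕ) : ℝ)) =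
        Real.sqrt K / (Real.sqrt ((N - s : ℕ) : ℝ) * 4) from by ring,
      div_div (Real.sqrt K * Real.sqrt m) ((m : ℝ) + 1) 2,
      div_le_div_iff₀ (by positivity) (by positivity)]
    nlinarith [mul_le_mul_of_nonneg_left key2 (Real.sqrt_nonneg (K : ℝ)),
      Real.sqrt_nonneg (m : ℝ), Real.sqrt_nonneg (K : ℝ)]
  calc (1 / 4) * Real.sqrt ((K : ℝ) / ((N - s : ℕ) : ℝ)) ≤ c / 2 := hfinal
  _ ≤ ∑ t ∈ Finset.Icc (s + 1) N, V t := by linarith
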